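/- Let δ ∈ (0,1], ζ ∈ [0, δ/2), c ≥ 0 and let f : [0,∞) → ℝ^d satisfy: for every t > 0 and all s, s̃ ∈ [0,t], |f(s) − f(s̃)| ≤ c · t^ζ · |s − s̃|^δ. Let T > 0, t > 0, let (h_n) be a bounded real sequence, and set T_n := T + h_n · n^{-3/2}. Then n^{-1} ∫₀^{tn} | f(s/T_n) − f(s/T) |² ds → 0 as n → ∞. -/

import Mathlib

open MeasureTheory Filter Real

/-- Convergence of the term `B_n` in the proof of the LAN theorem, when the Hölder
condition (S6) arises from a pointwise Hölder property of the θ-gradient of the signal: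
with `T_n = T + h_n n^{-3/2}` and `ζ < δ/2`, `n⁻¹ ∫₀^{tn} |f(s/T_n) − f(s/T)|² ds → 0`. -/
theorem remainder_Bn_tendsto_zero
    (d : ℕ) (δ ζ c : ℝ) (hδ : δ ∈ Set.Ioc (0:ℝ) 1) (hζ : ζ ∈ Set.Ico (0:ℝ) (δ / 2))
    (hc : 0 ≤ c)
    (f : ℝ → EuclideanSpace ℝ (Fin d))
    (hf : ∀ t > (0:ℝ), ∀ s ∈ Set.Icc (0:ℝ) t, ∀ s' ∈ Set.Icc (0:ℝ) t,
      ‖f s - f s'‖ ≤ c * t ^ ζ * |s - s'| ^ δ)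
    (T t : ℝ) (hT : 0 < T) (ht : 0 < t)
    (h : ℕ → ℝ) (hbdd : ∃ C : ℝ, ∀ n, |h n| ≤ C)
    (Tn : ℕ → ℝ) (hTn : ∀ n, Tn n = T + h n * (n : ℝ) ^ (-(3 / 2) : ℝ)) :
    Tendsto
      (fun n : ℕ => (n : ℝ)⁻¹ * ∫ s in (0:ℝ)..(t * n), ‖f (s / Tn n) - f (s / T)‖ ^ 2)
      atTop (nhds 0) := by
  obtain ⟨C, hC⟩ := hbdd
  have hC0 : 0 ≤ C := le_trans (abs_nonneg _) (hC 0)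
  obtain ⟨hδ0, hδ1⟩ := hδ
  obtain ⟨hζ0, hζδ⟩ := hζ
  set K1 : ℝ := 2 * t / T with hK1
  set K2 : ℝ := 2 * t * C / T ^ 2 with hK2
  have hK1pos : 0 < K1 := by positivity
  have hK2nn : 0 ≤ K2 := by positivity
  set K : ℝ := t * c ^ 2 * K1 ^ (2 * ζ) * K2 ^ (2 * δ) with hK
  have hKnn : 0 ≤ K := by positivity
  -- the comparison sequence tends to 0
  have hlim : Tendsto (fun n : ℕ => K * (n : ℝ) ^ (2 * ζ - δ)) atTop (nhds 0) := by
    have h1 : Tendsto (fun x : ℝ => x ^ (-(δ - 2 * ζ))) atTop (nhds 0) :=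
      tendsto_rpow_neg_atTop (by linarith)
    have h2 : Tendsto (fun n : ℕ => ((n : ℝ)) ^ (2 * ζ - δ)) atTop (nhds 0) := by
      have := h1.comp tendsto_natCast_atTop_atTop (α := ℕ)
      simpa [Function.comp_def, neg_sub, show -(δ - 2*ζ) = 2*ζ - δ by ring] using this
    simpa using h2.const_mul K
  refine squeeze_zero_norm' ?_ hlim
  -- eventual bound
  have hev1 : ∀ᶠ n : ℕ in atTop, C * (n : ℝ) ^ (-(3/2) : ℝ) < T / 2 := by
    have h1 : Tendsto (fun x : ℝ => x ^ (-(3/2) : ℝ)) atTop (nhds 0) :=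
      tendsto_rpow_neg_atTop (by norm_num)
    have h2 : Tendsto (fun n : ℕ => C * (n : ℝ) ^ (-(3/2) : ℝ)) atTop (nhds 0) := by
      simpa using (h1.comp tendsto_natCast_atTop_atTop (α := ℕ)).const_mul C
    exact h2.eventually_lt_const (by positivity)
  filter_upwards [hev1, eventually_ge_atTop 1] with n hn1 hn2
  have hn : (1 : ℝ) ≤ (n : ℝ) := by exact_mod_cast hn2
  have hnpos : (0 : ℝ) < n := by linarith
  have hTnT : |Tn n - T| ≤ C * (n : ℝ) ^ (-(3/2) : ℝ) := by
    rw [hTn n]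
    rw [add_sub_cancel_left, abs_mul, abs_of_nonneg (rpow_nonneg hnpos.le _)]
    exact mul_le_mul_of_nonneg_right (hC n) (rpow_nonneg hnpos.le _)
  have hTn2 : T / 2 ≤ Tn n := by
    have := abs_le.1 hTnT
    linarith [this.1, hn1]
  have hTnpos : 0 < Tn n := by linarith
  set M : ℝ := K1 * n with hM
  have hMpos : 0 < M := by positivity
  set D : ℝ := K2 * (n : ℝ) ^ (-(1/2) : ℝ) with hD
  have hDnn : 0 ≤ D := by positivity
  -- pointwise bound on the integrand
  have hpt : ∀ s ∈ Set.uIoc (0:ℝ) (t * n),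
      ‖(‖f (s / Tn n) - f (s / T)‖ ^ 2)‖ ≤ (c * M ^ ζ * D ^ δ) ^ 2 := by
    intro s hs
    rw [Set.uIoc_of_le (by positivity)] at hs
    obtain ⟨hs0, hs1⟩ := hs
    have hs0' : 0 ≤ s := hs0.le
    have hmem1 : s / Tn n ∈ Set.Icc (0:ℝ) M := by
      constructor
      · positivity
      · rw [div_le_iff₀ hTnpos, hM, hK1]
        rw [div_mul_eq_mul_div, div_mul_eq_mul_div, le_div_iff₀ hT]
        nlinarith
    have hmem2 : s / T ∈ Set.Icc (0:ℝ) M := by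
      constructor
      · positivity
      · rw [div_le_iff₀ hT, hM, hK1]
        rw [div_mul_eq_mul_div, div_mul_eq_mul_div, le_div_iff₀ hT]
        nlinarith [mul_le_mul_of_nonneg_right hs1 hT.le]
    have hdiff : |s / Tn n - s / T| ≤ D := by
      have heq : s / Tn n - s / T = s * (T - Tn n) / (Tn n * T) := by
        field_simp
      rw [heq, abs_div, abs_mul, abs_of_nonneg hs0', abs_of_pos (show (0:ℝ) < Tn n * T by positivity)]
      have hb1 : |T - Tn n| ≤ C * (n : ℝ) ^ (-(3/2) : ℝ) := by
        rwa [abs_sub_comm]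
      have hstep : s * |T - Tn n| / (Tn n * T) ≤
          (t * n) * (C * (n : ℝ) ^ (-(3/2) : ℝ)) / ((T / 2) * T) := by
        gcongr
      refine hstep.trans ?_
      have hrw : (n : ℝ) * (n : ℝ) ^ (-(3/2) : ℝ) = (n : ℝ) ^ (-(1/2) : ℝ) := by
        nth_rewrite 1 [← Real.rpow_one (n : ℝ)]
        rw [← Real.rpow_add hnpos]
        norm_num
      have heq2 : (t * n) * (C * (n : ℝ) ^ (-(3/2) : ℝ)) / ((T / 2) * T)
          = K2 * ((n:ℝ) * (n : ℝ) ^ (-(3/2) : ℝ)) := by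
        rw [hK2]
        field_simp
      rw [heq2, hrw, hD]
    have hb := hf M hMpos _ hmem1 _ hmem2
    have hb2 : c * M ^ ζ * |s / Tn n - s / T| ^ δ ≤ c * M ^ ζ * D ^ δ := by
      gcongr
    have hb3 : ‖f (s / Tn n) - f (s / T)‖ ≤ c * M ^ ζ * D ^ δ := hb.trans hb2
    rw [norm_pow, norm_norm]
    exact pow_le_pow_left₀ (norm_nonneg _) hb3 2
  have hint := intervalIntegral.norm_integral_le_of_norm_le_const hpt
  rw [Real.norm_eq_abs, abs_mul, abs_inv, abs_of_pos hnpos]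
  have hb4 : (n : ℝ)⁻¹ * |∫ s in (0:ℝ)..(t * n), ‖f (s / Tn n) - f (s / T)‖ ^ 2|
      ≤ (n : ℝ)⁻¹ * ((c * M ^ ζ * D ^ δ) ^ 2 * (t * n)) := by
    rw [sub_zero, abs_of_nonneg (by positivity), Real.norm_eq_abs] at hint
    gcongr
  refine hb4.trans (le_of_eq ?_)
  have sq_rpow : ∀ x : ℝ, 0 ≤ x → ∀ a : ℝ, (x ^ a) ^ 2 = x ^ (2 * a) := by
    intro x hx a
    rw [← Real.rpow_natCast (x ^ a) 2, ← Real.rpow_mul hx]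
    norm_num [mul_comm]
  have e1 : M ^ ζ = K1 ^ ζ * (n : ℝ) ^ ζ := Real.mul_rpow hK1pos.le hnpos.le
  have e2 : D ^ δ = K2 ^ δ * (n : ℝ) ^ (-(1/2) * δ) := by
    rw [hD, Real.mul_rpow hK2nn (rpow_nonneg hnpos.le _), ← Real.rpow_mul hnpos.le]
  have hnp : (n:ℝ)⁻¹ * ((n:ℝ) ^ (2*ζ) * ((n:ℝ) ^ (2*(-(1/2)*δ)) * (n:ℝ)))
      = (n:ℝ) ^ (2*ζ - δ) := by
    have h1 : (n:ℝ) ^ (2*ζ-δ) = (n:ℝ) ^ (-(1:ℝ)) *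
        ((n:ℝ) ^ (2*ζ) * ((n:ℝ) ^ (2*(-(1/2)*δ)) * (n:ℝ) ^ (1:ℝ))) := by
      rw [← Real.rpow_add hnpos, ← Real.rpow_add hnpos, ← Real.rpow_add hnpos]
      congr 1
      ring
    rw [h1, Real.rpow_one, Real.rpow_neg_one]
  calc (n : ℝ)⁻¹ * ((c * M ^ ζ * D ^ δ) ^ 2 * (t * ↑n))
      = (t * c ^ 2 * K1 ^ (2*ζ) * K2 ^ (2*δ)) *
        ((n:ℝ)⁻¹ * ((n:ℝ) ^ (2*ζ) * ((n:ℝ) ^ (2*(-(1/2)*δ)) * (n:ℝ)))) := by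
        rw [e1, e2, mul_pow, mul_pow, mul_pow, mul_pow,
          sq_rpow _ hK1pos.le, sq_rpow _ hnpos.le, sq_rpow _ hK2nn, sq_rpow _ hnpos.le]
        ring
    _ = K * (n:ℝ) ^ (2*ζ - δ) := by rw [hnp, hK]
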